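/- arXiv:1306.4711 — 2 statements merged into one kernel-verified Lean document; each statement's English description precedes it below -/
import Mathlib

section
/- Suppose a group H acts on sets X₁, …, X_M and that x_m ∈ X_m are points whose stabilizers in H each have infinite index. Then there is an infinite sequence g₁, g₂, … ∈ H such that for all 1 ≤ m ≤ M and all k ≠ l ≥ 1 we have g_k(x_m) ≠ g_l(x_m). -/
open scoped Pointwise

theorem stmt_1 {H : Type*} [Group H] (M : ℕ) (X : Fin M → Type*)
    [∀ m, MulAction H (X m)] (x : ∀ m, X m)
    (h : ∀ m, Infinite (H ⧸ MulAction.stabilizer H (x m))) :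
    ∃ g : ℕ → H, ∀ (m : Fin M) (k l : ℕ), k ≠ l → g k • x m ≠ g l • x m := by
  classical
  -- key step: avoid finitely many cosets of infinite-index stabilizers
  have key : ∀ s : Finset H, ∃ a : H, ∀ (m : Fin M), ∀ b ∈ s, a • x m ≠ b • x m := by
    intro s
    by_contra hcon
    push_neg at hcon
    have hcover : ⋃ i ∈ (Finset.univ ×ˢ s : Finset (Fin M × H)),
        i.2 • ((MulAction.stabilizer H (x i.1) : Subgroup H) : Set H) = Set.univ := by
      ext a
      simp only [Set.mem_iUnion, Set.mem_univ, iff_true, Finset.mem_product,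
        Finset.mem_univ, true_and]
      obtain ⟨m, b, hb, hab⟩ := hcon a
      refine ⟨(m, b), hb, ?_⟩
      rw [mem_leftCoset_iff]
      simp only [SetLike.mem_coe, MulAction.mem_stabilizer_iff, mul_smul]
      rw [hab, inv_smul_smul]
    obtain ⟨k, _, hfi⟩ := Subgroup.exists_finiteIndex_of_leftCoset_cover hcover
    have : (MulAction.stabilizer H (x k.1)).index = 0 := by
      have := h k.1
      exact Nat.card_eq_zero_of_infinite
    exact hfi.index_ne_zero this
  choose c hc using key
  -- build the sequence together with the finset of previous values
  let F : ℕ → H × Finset H := fun n => Nat.rec (c ∅, {c ∅})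
    (fun _ p => (c p.2, insert (c p.2) p.2)) n
  refine ⟨fun n => (F n).1, ?_⟩
  have hmem : ∀ n, (F n).1 ∈ (F n).2 := by
    intro n
    cases n with
    | zero => simp [F]
    | succ k => simp [F]
  have hmono : ∀ n, (F n).2 ⊆ (F (n + 1)).2 := by
    intro n
    simp only [F]
    exact Finset.subset_insert _ _
  have hmem' : ∀ i n, i ≤ n → (F i).1 ∈ (F n).2 := by
    intro i n hin
    induction n with
    | zero => simpa [Nat.le_zero.mp hin] using hmem 0
    | succ k ih =>
      rcases Nat.lt_or_ge i (k + 1) with hlt | hge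
      · exact hmono k (ih (Nat.lt_succ_iff.mp hlt))
      · have : i = k + 1 := le_antisymm hin hge
        subst this; exact hmem (k + 1)
  have main : ∀ (m : Fin M) (l k : ℕ), l < k → (F k).1 • x m ≠ (F l).1 • x m := by
    intro m l k hlk
    obtain ⟨j, rfl⟩ := Nat.exists_eq_add_of_lt hlk
    have h1 : (F l).1 ∈ (F (l + j)).2 := hmem' l (l + j) (Nat.le_add_right _ _)
    have h2 : (F (l + j + 1)).1 = c (F (l + j)).2 := rfl
    rw [h2]
    exact hc (F (l + j)).2 m _ h1
  intro m k l hkl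
  rcases Nat.lt_or_ge k l with hlt | hge
  · exact fun he => main m k l hlt he.symm
  · exact main m l k (lt_of_le_of_ne hge (Ne.symm hkl))
end

section
/- Let G be a group acting on a set X, and let x₁, x₂ ∈ X be two points whose stabilizers in G both have infinite index. Then there exist a sequence g₁, g₂, … in G such that for all k ≠ l, g_k·x₁ ≠ g_l·x₁ and g_k·x₂ ≠ g_l·x₂. -/
open scoped Pointwise

lemma key_step {G X : Type*} [Group G] [MulAction G X] (x₁ x₂ : X)
    (h₁ : Infinite (G ⧸ MulAction.stabilizer G x₁))
    (h₂ : Infinite (G ⧸ MulAction.stabilizer G x₂))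
    (s : Finset G) : ∃ g : G, ∀ h ∈ s, g • x₁ ≠ h • x₁ ∧ g • x₂ ≠ h • x₂ := by
  classical
  by_contra hc
  push_neg at hc
  set H : G × Bool → Subgroup G := fun i =>
    if i.2 then MulAction.stabilizer G x₁ else MulAction.stabilizer G x₂
  have hcovers : ⋃ i ∈ s ×ˢ (Finset.univ : Finset Bool), i.1 • (H i : Set G) = Set.univ := by
    ext g
    simp only [Set.mem_univ, iff_true, Set.mem_iUnion]
    obtain ⟨h, hs, hcase⟩ := hc g
    by_cases h1 : g • x₁ = h • x₁
    · refine ⟨(h, true), by simp [hs], ?_⟩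
      simp only [H, if_pos rfl, Set.mem_smul_set_iff_inv_smul_mem]
      rw [SetLike.mem_coe, MulAction.mem_stabilizer_iff, smul_eq_mul, mul_smul, h1, inv_smul_smul]
    · have h2 : g • x₂ = h • x₂ := by
        have := hcase; tauto
      refine ⟨(h, false), by simp [hs], ?_⟩
      simp only [H, Bool.false_eq_true, if_neg, Set.mem_smul_set_iff_inv_smul_mem, if_false]
      rw [SetLike.mem_coe, MulAction.mem_stabilizer_iff, smul_eq_mul, mul_smul, h2, inv_smul_smul]
  obtain ⟨k, _, hk⟩ := Subgroup.exists_finiteIndex_of_leftCoset_cover hcovers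
  rcases Bool.eq_false_or_eq_true k.2 with hb | hb
  · rw [show H k = MulAction.stabilizer G x₁ by simp [H, hb]] at hk
    exact hk.1 (by rw [Subgroup.index]; exact Nat.card_eq_zero_of_infinite)
  · rw [show H k = MulAction.stabilizer G x₂ by simp [H, hb]] at hk
    exact hk.1 (by rw [Subgroup.index]; exact Nat.card_eq_zero_of_infinite)

theorem stmt_11 {G X : Type*} [Group G] [MulAction G X] (x₁ x₂ : X)
    (h₁ : Infinite (G ⧸ MulAction.stabilizer G x₁))
    (h₂ : Infinite (G ⧸ MulAction.stabilizer G x₂)) :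
    ∃ g : ℕ → G, ∀ k l : ℕ, k ≠ l →
      g k • x₁ ≠ g l • x₁ ∧ g k • x₂ ≠ g l • x₂ := by
  classical
  choose F hF using key_step x₁ x₂ h₁ h₂
  let L : ℕ → List G := fun n => Nat.rec [] (fun _ prev => prev ++ [F prev.toFinset]) n
  let g : ℕ → G := fun n => F (L n).toFinset
  have hL : ∀ n, L (n + 1) = L n ++ [g n] := fun n => rfl
  have hmem : ∀ m n, m < n → g m ∈ L n := by
    intro m n hmn
    induction n with
    | zero => omega
    | succ n ih =>
      rw [hL, List.mem_append]
      rcases Nat.lt_succ_iff_lt_or_eq.mp hmn with h | h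
      · exact Or.inl (ih h)
      · exact Or.inr (by simp [h])
  have key : ∀ m n, m < n → g n • x₁ ≠ g m • x₁ ∧ g n • x₂ ≠ g m • x₂ := by
    intro m n hmn
    exact hF (L n).toFinset (g m) (List.mem_toFinset.mpr (hmem m n hmn))
  refine ⟨g, fun k l hkl => ?_⟩
  rcases lt_or_gt_of_ne hkl with h | h
  · exact ⟨(key k l h).1.symm, (key k l h).2.symm⟩
  · exact key l k h
end
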